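/- Fix an integer N ≥ 2 and define the map G : ℝ^N × (0,∞)^{N−1} → ℝ^{2N−1} by G(a_1,…,a_N, b_1,…,b_{N−1}) = ((J_{a,b})^1_{1,1}, (J_{a,b})^2_{1,1}, …, (J_{a,b})^{2N−1}_{1,1}), i.e. the k-th component of G is the (1,1) entry of the k-th power of the Jacobi matrix J_{a,b} (this entry equals the k-th moment m_k of the spectral measure of J_{a,b} at the first coordinate vector). Then G is continuously differentiable on ℝ^N × (0,∞)^{N−1} and at every point the absolute value of the determinant of its derivative (as a linear map ℝ^{2N−1} → ℝ^{2N−1}) equals ∏_{n=1}^{N−1} b_n^{2(N−n)−1}. -/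

import Mathlib

open MeasureTheory ProbabilityTheory Matrix Finset Real
open scoped ENNReal NNReal

noncomputable section

/-- The symmetric tridiagonal (Jacobi) matrix with diagonal `a` and
off-diagonal entries `√(b n)`. -/
def jacobiMatrix {N : ℕ} (a : Fin N → ℝ) (b : Fin (N - 1) → ℝ) :
    Matrix (Fin N) (Fin N) ℝ :=
  Matrix.of fun i j =>
    if i = j then a i
    else if h : (i : ℕ) + 1 = (j : ℕ) then
      Real.sqrt (b ⟨i, by have := j.isLt; omega⟩)
    else if h' : (j : ℕ) + 1 = (i : ℕ) then
      Real.sqrt (b ⟨j, by have := i.isLt; omega⟩)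
    else 0

lemma jacobiMatrix_isHermitian {N : ℕ} (a : Fin N → ℝ) (b : Fin (N - 1) → ℝ) :
    (jacobiMatrix a b).IsHermitian := by
  unfold Matrix.IsHermitian
  ext i j
  simp only [jacobiMatrix, Matrix.conjTranspose_apply, Matrix.of_apply, star_trivial]
  by_cases hij : i = j
  · subst hij; simp
  · have hji : j ≠ i := fun h => hij h.symm
    rw [if_neg hji, if_neg hij]
    by_cases h1 : (j : ℕ) + 1 = (i : ℕ)
    · have h2 : ¬((i : ℕ) + 1 = (j : ℕ)) := by omega
      rw [dif_pos h1, dif_neg h2, dif_pos h1]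
    · by_cases h2 : (i : ℕ) + 1 = (j : ℕ)
      · rw [dif_neg h1, dif_pos h2, dif_pos h2]
      · rw [dif_neg h1, dif_neg h2, dif_neg h2, dif_neg h1]

/-- Reordering of a finite tuple in decreasing order. -/
def sortDesc {N : ℕ} (v : Fin N → ℝ) : Fin N → ℝ :=
  fun i => v (Tuple.sort v (Fin.rev i))

/-- The eigenvalues of the Jacobi matrix `J_{a,b}`, in decreasing order. -/
def jacobiEigs {N : ℕ} (a : Fin N → ℝ) (b : Fin (N - 1) → ℝ) : Fin N → ℝ :=
  sortDesc (jacobiMatrix_isHermitian a b).eigenvalues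

/-- The squared first coordinates of unit eigenvectors of the Jacobi matrix `J_{a,b}`,
indexed compatibly with `jacobiEigs` (decreasing eigenvalue order):
`jacobiWeights hN a b i` is the squared first coordinate of a unit eigenvector
associated with the eigenvalue `jacobiEigs a b i`. -/
def jacobiWeights {N : ℕ} (hN : 0 < N) (a : Fin N → ℝ) (b : Fin (N - 1) → ℝ) :
    Fin N → ℝ :=
  fun i =>
    ((jacobiMatrix_isHermitian a b).eigenvectorBasis
        (Tuple.sort (jacobiMatrix_isHermitian a b).eigenvalues (Fin.rev i)) ⟨0, hN⟩) ^ 2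

/-- The spectral map: Jacobi data `(a, b)` is sent to the decreasingly ordered
eigenvalues together with the first `N - 1` spectral weights. -/
def spectralMap {N : ℕ} (hN : 0 < N) (a : Fin N → ℝ) (b : Fin (N - 1) → ℝ) :
    (Fin N → ℝ) × (Fin (N - 1) → ℝ) :=
  ⟨jacobiEigs a b, fun i => jacobiWeights hN a b ⟨i, by have := i.isLt; omega⟩⟩

/-- The Vandermonde product `∏_{i<j} (x j - x i)`. -/
def vdm {N : ℕ} (x : Fin N → ℝ) : ℝ :=
  ∏ i : Fin N, ∏ j ∈ Finset.Ioi i, (x j - x i)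

/-- The open chamber of decreasing vectors `x 0 > x 1 > … `. -/
def chamber (N : ℕ) : Set (Fin N → ℝ) := {x | ∀ i j : Fin N, i < j → x j < x i}

/-- The open simplex of positive weights with sum `< 1`. -/
def openSimplex (N : ℕ) : Set (Fin (N - 1) → ℝ) :=
  {w | (∀ i, 0 < w i) ∧ ∑ i, w i < 1}

/-- Extension of `N - 1` weights by the last weight `1 - ∑ w`. -/
def wExt {N : ℕ} (w : Fin (N - 1) → ℝ) : Fin N → ℝ :=
  fun n => if h : (n : ℕ) < N - 1 then w ⟨n, h⟩ else 1 - ∑ i, w i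

/-- The first `N` coordinates of a vector of length `2N - 1`. -/
def xPart {N : ℕ} (p : Fin (2 * N - 1) → ℝ) : Fin N → ℝ :=
  fun i => p ⟨i, by have := i.isLt; omega⟩

/-- The last `N - 1` coordinates of a vector of length `2N - 1`. -/
def wPart {N : ℕ} (p : Fin (2 * N - 1) → ℝ) : Fin (N - 1) → ℝ :=
  fun i => p ⟨N + i, by have := i.isLt; omega⟩

/-- The diagonal coefficients `a` built from the parameters `ξ`:
`a 1 = ξ 1`, `a n = ξ (2n-2) + ξ (2n-1)` (in one-based notation). -/
def xiToA {N : ℕ} (ξ : Fin (2 * N - 1) → ℝ) : Fin N → ℝ :=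
  fun n =>
    if h : (n : ℕ) = 0 then ξ ⟨0, by have := n.isLt; omega⟩
    else ξ ⟨2 * (n : ℕ) - 1, by have := n.isLt; omega⟩ +
      ξ ⟨2 * (n : ℕ), by have := n.isLt; omega⟩

/-- The off-diagonal coefficients `b` built from the parameters `ξ`:
`b n = ξ (2n-1) * ξ (2n)` (in one-based notation). -/
def xiToB {N : ℕ} (ξ : Fin (2 * N - 1) → ℝ) : Fin (N - 1) → ℝ :=
  fun n => ξ ⟨2 * (n : ℕ), by have := n.isLt; omega⟩ *
    ξ ⟨2 * (n : ℕ) + 1, by have := n.isLt; omega⟩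

/-- The chain-sequence parameters `ξ` built from canonical moments `c`:
`ξ 1 = c 1` and `ξ n = (1 - c (n-1)) * c n` (in one-based notation). -/
def cToXi {N : ℕ} (c : Fin (2 * N - 1) → ℝ) : Fin (2 * N - 1) → ℝ :=
  fun k =>
    if (k : ℕ) = 0 then c k
    else (1 - c ⟨(k : ℕ) - 1, by have := k.isLt; omega⟩) * c k

/-- The lower bidiagonal matrix `Ξ` with diagonal `√ξ 1, √ξ 3, …` and
subdiagonal `√ξ 2, √ξ 4, …` (in one-based notation). -/
def bidiag {N : ℕ} (ξ : Fin (2 * N - 1) → ℝ) : Matrix (Fin N) (Fin N) ℝ :=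
  Matrix.of fun i j =>
    if i = j then Real.sqrt (ξ ⟨2 * (i : ℕ), by have := i.isLt; omega⟩)
    else if h : (j : ℕ) + 1 = (i : ℕ) then
      Real.sqrt (ξ ⟨2 * (j : ℕ) + 1, by have := i.isLt; omega⟩)
    else 0

lemma mul_transpose_isHermitian {N : ℕ} (A : Matrix (Fin N) (Fin N) ℝ) :
    (A * Aᵀ).IsHermitian := by
  unfold Matrix.IsHermitian
  ext i j
  simp [Matrix.mul_apply, Matrix.conjTranspose_apply, Matrix.transpose_apply, mul_comm]

/-- The map sending (rolled-up) Jacobi data `(a, b)` to the moments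
`((J_{a,b})^k)_{1,1}`, `k = 1, …, 2N - 1`, of its spectral measure. -/
def jacobiMomentMap (N : ℕ) (hN : 0 < N) (p : Fin (2 * N - 1) → ℝ) :
    Fin (2 * N - 1) → ℝ :=
  fun k => (jacobiMatrix (xPart p) (wPart p) ^ ((k : ℕ) + 1)) ⟨0, hN⟩ ⟨0, hN⟩

section JacAux
namespace JacobiAux

variable {N : ℕ}

/-- plain tridiagonal matrix, off-diagonal entries taken literally from `q`. -/
def Tm (N : ℕ) (q : Fin (2 * N - 1) → ℝ) : Matrix (Fin N) (Fin N) ℝ :=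
  Matrix.of fun i j =>
    if i = j then q ⟨i, by have := i.isLt; omega⟩
    else if h : (i : ℕ) + 1 = (j : ℕ) then q ⟨N + (i : ℕ), by have := j.isLt; omega⟩
    else if h' : (j : ℕ) + 1 = (i : ℕ) then q ⟨N + (j : ℕ), by have := i.isLt; omega⟩
    else 0

def TmL (N : ℕ) : (Fin (2 * N - 1) → ℝ) →ₗ[ℝ] Matrix (Fin N) (Fin N) ℝ where
  toFun := Tm N
  map_add' x y := by
    ext i j
    simp only [Tm, Matrix.of_apply, Matrix.add_apply, Pi.add_apply]
    split_ifs <;> simp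
  map_smul' c x := by
    ext i j
    simp only [Tm, Matrix.of_apply, Matrix.smul_apply, Pi.smul_apply, smul_eq_mul,
      RingHom.id_apply]
    split_ifs <;> simp

lemma Tm_transpose (N : ℕ) (q : Fin (2 * N - 1) → ℝ) : (Tm N q)ᵀ = Tm N q := by
  ext i j
  simp only [Matrix.transpose_apply, Tm, Matrix.of_apply, Fin.ext_iff]
  split_ifs <;> first | rfl | omega | (congr 1; apply Fin.ext; simp; omega)

lemma Tm_pow_symm (N : ℕ) (q : Fin (2 * N - 1) → ℝ) (m : ℕ) (i j : Fin N) :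
    (Tm N q ^ m) i j = (Tm N q ^ m) j i := by
  conv_lhs => rw [← Tm_transpose N q]
  rw [← Matrix.transpose_pow, Matrix.transpose_apply]

/-- product of the first `m` off-diagonal entries. -/
def cprod (N : ℕ) (q : Fin (2 * N - 1) → ℝ) (m : ℕ) : ℝ :=
  ∏ t ∈ Finset.range m, if h : t < N - 1 then q ⟨N + t, by omega⟩ else 1

lemma cprod_succ (q : Fin (2 * N - 1) → ℝ) {j : ℕ} (hj : j < N - 1) :
    cprod N q (j + 1) = cprod N q j * q ⟨N + j, by omega⟩ := by
  rw [cprod, Finset.prod_range_succ, dif_pos hj, cprod]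

lemma pow_entry (N : ℕ) (q : Fin (2 * N - 1) → ℝ) (h0 : 0 < N) : ∀ (m : ℕ) (j : Fin N),
    ((m < (j : ℕ) → (Tm N q ^ m) ⟨0, h0⟩ j = 0) ∧
      (m = (j : ℕ) → (Tm N q ^ m) ⟨0, h0⟩ j = cprod N q m)) := by
  intro m
  induction m with
  | zero =>
    intro j
    constructor
    · intro hj
      rw [pow_zero]
      refine Matrix.one_apply_ne (fun h => ?_)
      apply_fun Fin.val at h
      simp at h
      omega
    · intro hj
      have : j = ⟨0, h0⟩ := by apply Fin.ext; show (j : ℕ) = 0; omega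
      rw [pow_zero, this, Matrix.one_apply_eq]
      simp [cprod]
  | succ m ih =>
    intro j
    have hmul : (Tm N q ^ (m + 1)) ⟨0, h0⟩ j
        = ∑ s : Fin N, (Tm N q ^ m) ⟨0, h0⟩ s * Tm N q s j := by
      rw [pow_succ, Matrix.mul_apply]
    constructor
    · intro hj
      rw [hmul]
      apply Finset.sum_eq_zero
      intro s _
      rcases lt_or_ge (m : ℕ) (s : ℕ) with hs | hs
      · rw [(ih s).1 hs, zero_mul]
      · have h1 : s ≠ j := by intro h; rw [h] at hs; omega
        have h2 : ¬((s : ℕ) + 1 = (j : ℕ)) := by omega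
        have h3 : ¬((j : ℕ) + 1 = (s : ℕ)) := by omega
        simp only [Tm, Matrix.of_apply, if_neg h1, dif_neg h2, dif_neg h3, mul_zero]
    · intro hj
      have hmN : m < N := by omega
      have hmN1 : m < N - 1 := by have := j.isLt; omega
      rw [hmul, Finset.sum_eq_single (⟨m, hmN⟩ : Fin N)]
      · have h1 : (⟨m, hmN⟩ : Fin N) ≠ j := by
          intro h; apply_fun Fin.val at h; simp at h; omega
        have h2 : ((⟨m, hmN⟩ : Fin N) : ℕ) + 1 = (j : ℕ) := by show m + 1 = _; omega
        have hc : Tm N q ⟨m, hmN⟩ j = q ⟨N + m, by omega⟩ := by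
          simp only [Tm, Matrix.of_apply, if_neg h1, dif_pos h2]
        rw [hc, (ih ⟨m, hmN⟩).2 (by simp), cprod, cprod, Finset.prod_range_succ,
          dif_pos hmN1]
      · intro s _ hs
        rcases lt_or_ge (m : ℕ) (s : ℕ) with h | h
        · rw [(ih s).1 h, zero_mul]
        · have hsm : (s : ℕ) < m := by
            rcases lt_or_eq_of_le h with h' | h'
            · exact h'
            · exact absurd (Fin.ext h' : s = ⟨m, hmN⟩) hs
          have h1 : s ≠ j := by intro h'; rw [h'] at hsm; omega
          have h2 : ¬((s : ℕ) + 1 = (j : ℕ)) := by omega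
          have h3 : ¬((j : ℕ) + 1 = (s : ℕ)) := by omega
          simp only [Tm, Matrix.of_apply, if_neg h1, dif_neg h2, dif_neg h3, mul_zero]
      · intro h
        exact absurd (Finset.mem_univ _) h

lemma pe_lt (h0 : 0 < N) (q : Fin (2 * N - 1) → ℝ) {m j : ℕ} (hj : j < N) (h : m < j) :
    (Tm N q ^ m) ⟨0, h0⟩ ⟨j, hj⟩ = 0 ∧ (Tm N q ^ m) ⟨j, hj⟩ ⟨0, h0⟩ = 0 := by
  have h1 := (pow_entry N q h0 m ⟨j, hj⟩).1 h
  exact ⟨h1, by rw [Tm_pow_symm]; exact h1⟩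

lemma pe_eq (h0 : 0 < N) (q : Fin (2 * N - 1) → ℝ) {j : ℕ} (hj : j < N) :
    (Tm N q ^ j) ⟨0, h0⟩ ⟨j, hj⟩ = cprod N q j ∧
      (Tm N q ^ j) ⟨j, hj⟩ ⟨0, h0⟩ = cprod N q j := by
  have h1 := (pow_entry N q h0 j ⟨j, hj⟩).2 rfl
  exact ⟨h1, by rw [Tm_pow_symm]; exact h1⟩

attribute [local instance] Matrix.linftyOpNormedRing Matrix.linftyOpNormedAlgebra

def TCL (N : ℕ) : (Fin (2 * N - 1) → ℝ) →L[ℝ] Matrix (Fin N) (Fin N) ℝ :=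
  LinearMap.toContinuousLinearMap (TmL N)

def Dpow (N : ℕ) (m : ℕ) (q : Fin (2 * N - 1) → ℝ) :
    (Fin (2 * N - 1) → ℝ) →ₗ[ℝ] Matrix (Fin N) (Fin N) ℝ :=
  ∑ i ∈ Finset.range m,
    (LinearMap.mulLeft ℝ (Tm N q ^ i)) ∘ₗ (LinearMap.mulRight ℝ (Tm N q ^ (m - 1 - i))) ∘ₗ (TmL N)

lemma Dpow_apply (m : ℕ) (q v : Fin (2 * N - 1) → ℝ) :
    Dpow N m q v = ∑ i ∈ Finset.range m, Tm N q ^ i * Tm N v * Tm N q ^ (m - 1 - i) := by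
  simp only [Dpow, LinearMap.coe_sum, Finset.sum_apply, LinearMap.comp_apply,
    LinearMap.mulLeft_apply, LinearMap.mulRight_apply]
  refine Finset.sum_congr rfl fun i _ => ?_
  show Tm N q ^ i * (Tm N v * Tm N q ^ (m - 1 - i)) = _
  rw [mul_assoc]

lemma hasFDerivAt_Tm_pow (m : ℕ) (q : Fin (2 * N - 1) → ℝ) :
    HasFDerivAt (fun q => Tm N q ^ m) (LinearMap.toContinuousLinearMap (Dpow N m q)) q := by
  induction m with
  | zero =>
    simp only [pow_zero, Dpow, Finset.range_zero, Finset.sum_empty, map_zero]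
    exact hasFDerivAt_const _ _
  | succ m ih =>
    have hT : HasFDerivAt (fun q : Fin (2 * N - 1) → ℝ => Tm N q) (TCL N) q := by
      have h := (TCL N).hasFDerivAt (x := q)
      exact h
    have h := ih.mul' hT
    have hfun : (fun q : Fin (2 * N - 1) → ℝ => Tm N q ^ (m + 1))
        = fun q => Tm N q ^ m * Tm N q := by
      funext q; rw [pow_succ]
    rw [hfun]
    refine h.congr_fderiv ?_
    apply ContinuousLinearMap.ext
    intro v
    show Tm N q ^ m * Tm N v + Dpow N m q v * Tm N q = Dpow N (m + 1) q v
    symm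
    simp only [LinearMap.coe_toContinuousLinearMap', ContinuousLinearMap.add_apply,
      ContinuousLinearMap.smul_apply, ContinuousLinearMap.smulRight_apply, Dpow_apply,
      smul_eq_mul, TCL]
    rw [Finset.sum_range_succ, Finset.sum_mul]
    have h1 : ∀ i ∈ Finset.range m, Tm N q ^ i * Tm N v * Tm N q ^ (m + 1 - 1 - i)
        = Tm N q ^ i * Tm N v * Tm N q ^ (m - 1 - i) * Tm N q := by
      intro i hi
      rw [Finset.mem_range] at hi
      rw [mul_assoc _ _ (Tm N q), ← pow_succ]
      congr 2
      omega
    rw [Finset.sum_congr rfl h1]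
    have h2 : m + 1 - 1 - m = 0 := by omega
    rw [h2, pow_zero, mul_one, add_comm]

def entryCLM (N : ℕ) (i j : Fin N) : Matrix (Fin N) (Fin N) ℝ →L[ℝ] ℝ :=
  LinearMap.toContinuousLinearMap
    { toFun := fun A => A i j
      map_add' := fun _ _ => rfl
      map_smul' := fun _ _ => rfl }

def Fm (N : ℕ) (h0 : 0 < N) (q : Fin (2 * N - 1) → ℝ) : Fin (2 * N - 1) → ℝ :=
  fun k => (Tm N q ^ ((k : ℕ) + 1)) ⟨0, h0⟩ ⟨0, h0⟩

def DFCL (N : ℕ) (h0 : 0 < N) (q : Fin (2 * N - 1) → ℝ) :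
    (Fin (2 * N - 1) → ℝ) →L[ℝ] (Fin (2 * N - 1) → ℝ) :=
  ContinuousLinearMap.pi fun k =>
    (entryCLM N ⟨0, h0⟩ ⟨0, h0⟩).comp
      (LinearMap.toContinuousLinearMap (Dpow N ((k : ℕ) + 1) q))

lemma hasFDerivAt_Fm (h0 : 0 < N) (q : Fin (2 * N - 1) → ℝ) :
    HasFDerivAt (Fm N h0) (DFCL N h0 q) q := by
  apply hasFDerivAt_pi''
  intro k
  have h := (entryCLM N ⟨0, h0⟩ ⟨0, h0⟩).hasFDerivAt.comp q
    (hasFDerivAt_Tm_pow ((k : ℕ) + 1) q)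
  have h2 : (ContinuousLinearMap.proj k).comp (DFCL N h0 q)
      = (entryCLM N ⟨0, h0⟩ ⟨0, h0⟩).comp
          (LinearMap.toContinuousLinearMap (Dpow N ((k : ℕ) + 1) q)) := by
    rw [DFCL, ContinuousLinearMap.proj_pi]
  rw [h2]
  exact h

def sqv (N : ℕ) (p : Fin (2 * N - 1) → ℝ) : Fin (2 * N - 1) → ℝ :=
  fun l => if (l : ℕ) < N then p l else Real.sqrt (p l)

def DsqCL (N : ℕ) (p : Fin (2 * N - 1) → ℝ) :
    (Fin (2 * N - 1) → ℝ) →L[ℝ] (Fin (2 * N - 1) → ℝ) :=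
  ContinuousLinearMap.pi fun l =>
    if (l : ℕ) < N then ContinuousLinearMap.proj l
    else (1 / (2 * Real.sqrt (p l))) • ContinuousLinearMap.proj l

lemma hasFDerivAt_sqv (p : Fin (2 * N - 1) → ℝ)
    (hp : ∀ l : Fin (2 * N - 1), N ≤ (l : ℕ) → 0 < p l) :
    HasFDerivAt (sqv N) (DsqCL N p) p := by
  apply hasFDerivAt_pi''
  intro l
  rw [DsqCL, ContinuousLinearMap.proj_pi]
  by_cases h : (l : ℕ) < N
  · rw [if_pos h]
    have : (fun p : Fin (2 * N - 1) → ℝ => sqv N p l) = fun p => p l := by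
      funext p; simp [sqv, if_pos h]
    rw [this]
    exact hasFDerivAt_apply l p
  · rw [if_neg h]
    have hfun : (fun p : Fin (2 * N - 1) → ℝ => sqv N p l) = fun p => Real.sqrt (p l) := by
      funext p; simp [sqv, if_neg h]
    rw [hfun]
    have hpl : p l ≠ 0 := ne_of_gt (hp l (le_of_not_gt h))
    exact (hasFDerivAt_apply l p).sqrt hpl

def el (N : ℕ) (l : Fin (2 * N - 1)) : Fin (2 * N - 1) → ℝ := fun l' => if l' = l then 1 else 0

lemma mul_std_mul (A B : Matrix (Fin N) (Fin N) ℝ) (r c x y : Fin N) :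
    (A * Matrix.single r c (1 : ℝ) * B) x y = A x r * B c y := by
  rw [Matrix.mul_assoc, Matrix.mul_apply, Finset.sum_eq_single r]
  · rw [Matrix.single_mul_apply_same, one_mul]
  · intro s _ hs
    rw [Matrix.single_mul_apply_of_ne (a := s) (b := y) (h := hs), mul_zero]
  · intro h; exact absurd (Finset.mem_univ _) h

def σp (N : ℕ) : Equiv.Perm (Fin (2 * N - 1)) where
  toFun l := if h : (l : ℕ) % 2 = 0 then ⟨(l : ℕ) / 2, by have := l.isLt; omega⟩
    else ⟨N + (l : ℕ) / 2, by have := l.isLt; omega⟩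
  invFun k := if h : (k : ℕ) < N then ⟨2 * (k : ℕ), by have := k.isLt; omega⟩
    else ⟨2 * ((k : ℕ) - N) + 1, by have := k.isLt; omega⟩
  left_inv l := by
    have hl := l.isLt
    dsimp only
    split_ifs with h1 h2 h2 <;> (try simp only [Fin.val_mk] at h1 h2 ⊢) <;>
      (try apply Fin.ext) <;> (try simp only [Fin.val_mk]) <;> omega
  right_inv k := by
    have hk := k.isLt
    dsimp only
    split_ifs with h1 h2 h2 <;> (try simp only [Fin.val_mk] at h1 h2 ⊢) <;>
      (try apply Fin.ext) <;> (try simp only [Fin.val_mk]) <;> omega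

def τp (N : ℕ) : (Fin N ⊕ Fin (N - 1)) ≃ Fin (2 * N - 1) where
  toFun s := Sum.rec (fun j => ⟨2 * (j : ℕ), by have := j.isLt; omega⟩)
    (fun j => ⟨2 * (j : ℕ) + 1, by have := j.isLt; omega⟩) s
  invFun k := if h : (k : ℕ) % 2 = 0 then Sum.inl ⟨(k : ℕ) / 2, by have := k.isLt; omega⟩
    else Sum.inr ⟨(k : ℕ) / 2, by have := k.isLt; omega⟩
  left_inv s := by
    rcases s with j | j
    · dsimp only
      rw [dif_pos (by (try simp only [Fin.val_mk]); omega)]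
      congr 1
      apply Fin.ext
      try simp only [Fin.val_mk]
      omega
    · dsimp only
      rw [dif_neg (by (try simp only [Fin.val_mk]); omega)]
      congr 1
      apply Fin.ext
      try simp only [Fin.val_mk]
      omega
  right_inv k := by
    have hk := k.isLt
    dsimp only
    split_ifs with h <;> (apply Fin.ext) <;>
      rcases Nat.even_or_odd (k : ℕ) with he | he <;>
      (try simp only [Fin.val_mk]) <;> omega

lemma σp_even (l : Fin (2 * N - 1)) (h : (l : ℕ) % 2 = 0) :
    σp N l = ⟨(l : ℕ) / 2, by have := l.isLt; omega⟩ := by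
  simp only [σp, Equiv.coe_fn_mk, dif_pos h]

lemma σp_odd (l : Fin (2 * N - 1)) (h : ¬ (l : ℕ) % 2 = 0) :
    σp N l = ⟨N + (l : ℕ) / 2, by have := l.isLt; omega⟩ := by
  simp only [σp, Equiv.coe_fn_mk, dif_neg h]

lemma τp_inl (j : Fin N) : τp N (Sum.inl j) = ⟨2 * (j : ℕ), by have := j.isLt; omega⟩ := rfl

lemma τp_inr (j : Fin (N - 1)) :
    τp N (Sum.inr j) = ⟨2 * (j : ℕ) + 1, by have := j.isLt; omega⟩ := rfl

def ρp (N : ℕ) : (Fin N ⊕ Fin (N - 1)) ≃ Fin (2 * N - 1) where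
  toFun s := Sum.rec (fun j => ⟨(j : ℕ), by have := j.isLt; omega⟩)
    (fun j => ⟨N + (j : ℕ), by have := j.isLt; omega⟩) s
  invFun k := if h : (k : ℕ) < N then Sum.inl ⟨(k : ℕ), h⟩
    else Sum.inr ⟨(k : ℕ) - N, by have := k.isLt; omega⟩
  left_inv s := by
    rcases s with j | j
    · dsimp only
      rw [dif_pos (by (try simp only [Fin.val_mk]); exact j.isLt)]
    · dsimp only
      rw [dif_neg (by (try simp only [Fin.val_mk]); omega)]
      congr 1
      apply Fin.ext
      try simp only [Fin.val_mk]
      omega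
  right_inv k := by
    have hk := k.isLt
    dsimp only
    split_ifs with h <;> (apply Fin.ext) <;> (try simp only [Fin.val_mk]) <;> omega

lemma ρp_inl (j : Fin N) : ρp N (Sum.inl j) = ⟨(j : ℕ), by have := j.isLt; omega⟩ := rfl

lemma ρp_inr (j : Fin (N - 1)) :
    ρp N (Sum.inr j) = ⟨N + (j : ℕ), by have := j.isLt; omega⟩ := rfl

lemma Tm_el_lo {j : ℕ} (hjN : j < N) (hj2 : j < 2 * N - 1) :
    Tm N (el N ⟨j, hj2⟩) = Matrix.single ⟨j, hjN⟩ ⟨j, hjN⟩ (1 : ℝ) := by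
  ext i i'
  have hi := i.isLt
  have hi' := i'.isLt
  simp only [Tm, Matrix.of_apply, el, Matrix.single, Fin.ext_iff, Fin.mk.injEq,
    Fin.val_mk]
  split_ifs <;> first | rfl | omega

lemma Tm_el_hi {j : ℕ} (hj : j < N - 1) :
    Tm N (el N ⟨N + j, by omega⟩)
      = Matrix.single ⟨j, by omega⟩ ⟨j + 1, by omega⟩ (1 : ℝ)
        + Matrix.single ⟨j + 1, by omega⟩ ⟨j, by omega⟩ (1 : ℝ) := by
  ext i i'
  have hi := i.isLt
  have hi' := i'.isLt
  simp only [Tm, Matrix.of_apply, el, Matrix.add_apply, Matrix.single, Fin.ext_iff,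
    Fin.mk.injEq, Fin.val_mk]
  split_ifs <;> first | rfl | omega | norm_num | (exfalso; omega)

lemma MJ_apply (h0 : 0 < N) (q : Fin (2 * N - 1) → ℝ) (k l : Fin (2 * N - 1)) :
    LinearMap.toMatrix' ((DFCL N h0 q) : (Fin (2 * N - 1) → ℝ) →ₗ[ℝ] (Fin (2 * N - 1) → ℝ)) k l
      = ∑ i ∈ Finset.range ((k : ℕ) + 1),
          (Tm N q ^ i * Tm N (el N l) * Tm N q ^ ((k : ℕ) - i)) ⟨0, h0⟩ ⟨0, h0⟩ := by
  rw [LinearMap.toMatrix'_apply]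
  have hel : (Pi.single l (1 : ℝ) : Fin (2 * N - 1) → ℝ) = el N l := by
    funext x; simp [el, Pi.single_apply]
  rw [hel]
  simp only [ContinuousLinearMap.coe_coe, DFCL, ContinuousLinearMap.pi_apply,
    ContinuousLinearMap.comp_apply, LinearMap.coe_toContinuousLinearMap', entryCLM,
    LinearMap.coe_mk, AddHom.coe_mk, Dpow_apply, Matrix.sum_apply]
  show (∑ i ∈ Finset.range ((k : ℕ) + 1),
    Tm N q ^ i * Tm N (el N l) * Tm N q ^ ((k : ℕ) + 1 - 1 - i)) ⟨0, h0⟩ ⟨0, h0⟩ = _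
  rw [Matrix.sum_apply]
  refine Finset.sum_congr rfl fun i hi => ?_
  have he : (k : ℕ) + 1 - 1 - i = (k : ℕ) - i := by omega
  rw [he]

lemma MJ_colA (h0 : 0 < N) (q : Fin (2 * N - 1) → ℝ) (k c : Fin (2 * N - 1))
    (hc : (c : ℕ) < N) :
    LinearMap.toMatrix' ((DFCL N h0 q) : (Fin (2 * N - 1) → ℝ) →ₗ[ℝ] (Fin (2 * N - 1) → ℝ)) k c
      = ∑ i ∈ Finset.range ((k : ℕ) + 1),
          (Tm N q ^ i) ⟨0, h0⟩ ⟨(c : ℕ), hc⟩ * (Tm N q ^ ((k : ℕ) - i)) ⟨(c : ℕ), hc⟩ ⟨0, h0⟩ := by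
  rw [MJ_apply h0 q k c]
  refine Finset.sum_congr rfl fun i _ => ?_
  rw [show (el N c) = el N ⟨(c : ℕ), c.isLt⟩ from rfl, Tm_el_lo hc c.isLt, mul_std_mul]

lemma colA_zero (h0 : 0 < N) (q : Fin (2 * N - 1) → ℝ) (k c : Fin (2 * N - 1))
    (hc : (c : ℕ) < N) (hk : (k : ℕ) < 2 * (c : ℕ)) :
    LinearMap.toMatrix' ((DFCL N h0 q) : (Fin (2 * N - 1) → ℝ) →ₗ[ℝ] (Fin (2 * N - 1) → ℝ)) k c
      = 0 := by
  rw [MJ_colA h0 q k c hc]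
  apply Finset.sum_eq_zero
  intro i hi
  rw [Finset.mem_range] at hi
  rcases lt_or_ge i (c : ℕ) with h | h
  · rw [(pe_lt h0 q hc h).1, zero_mul]
  · rw [(pe_lt h0 q hc (show (k : ℕ) - i < (c : ℕ) by omega)).2, mul_zero]

lemma colA_diag (h0 : 0 < N) (q : Fin (2 * N - 1) → ℝ) (k c : Fin (2 * N - 1))
    (hc : (c : ℕ) < N) (hk : (k : ℕ) = 2 * (c : ℕ)) :
    LinearMap.toMatrix' ((DFCL N h0 q) : (Fin (2 * N - 1) → ℝ) →ₗ[ℝ] (Fin (2 * N - 1) → ℝ)) k c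
      = cprod N q (c : ℕ) ^ 2 := by
  rw [MJ_colA h0 q k c hc, Finset.sum_eq_single (c : ℕ)]
  · rw [(pe_eq h0 q hc).1, show (k : ℕ) - (c : ℕ) = (c : ℕ) by omega, (pe_eq h0 q hc).2, sq]
  · intro i hi hic
    rw [Finset.mem_range] at hi
    rcases lt_or_ge i (c : ℕ) with h | h
    · rw [(pe_lt h0 q hc h).1, zero_mul]
    · rw [(pe_lt h0 q hc (show (k : ℕ) - i < (c : ℕ) by omega)).2, mul_zero]
  · intro h
    rw [Finset.mem_range] at h
    omega

lemma MJ_colB (h0 : 0 < N) (q : Fin (2 * N - 1) → ℝ) (k c : Fin (2 * N - 1))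
    {j : ℕ} (hj : j < N - 1) (hcv : (c : ℕ) = N + j) :
    LinearMap.toMatrix' ((DFCL N h0 q) : (Fin (2 * N - 1) → ℝ) →ₗ[ℝ] (Fin (2 * N - 1) → ℝ)) k c
      = ∑ i ∈ Finset.range ((k : ℕ) + 1),
          ((Tm N q ^ i) ⟨0, h0⟩ ⟨j, by omega⟩
              * (Tm N q ^ ((k : ℕ) - i)) ⟨j + 1, by omega⟩ ⟨0, h0⟩
            + (Tm N q ^ i) ⟨0, h0⟩ ⟨j + 1, by omega⟩
              * (Tm N q ^ ((k : ℕ) - i)) ⟨j, by omega⟩ ⟨0, h0⟩) := by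
  rcases c with ⟨cv, hcl⟩
  simp only [Fin.val_mk] at hcv
  subst hcv
  rw [MJ_apply h0 q k ⟨N + j, hcl⟩]
  refine Finset.sum_congr rfl fun i _ => ?_
  rw [Tm_el_hi hj, mul_add, add_mul, Matrix.add_apply, mul_std_mul, mul_std_mul]

lemma colB_zero (h0 : 0 < N) (q : Fin (2 * N - 1) → ℝ) (k c : Fin (2 * N - 1))
    {j : ℕ} (hj : j < N - 1) (hcv : (c : ℕ) = N + j) (hk : (k : ℕ) < 2 * j + 1) :
    LinearMap.toMatrix' ((DFCL N h0 q) : (Fin (2 * N - 1) → ℝ) →ₗ[ℝ] (Fin (2 * N - 1) → ℝ)) k c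
      = 0 := by
  have hjN : j < N := by omega
  have hj1N : j + 1 < N := by omega
  rw [MJ_colB h0 q k c hj hcv]
  apply Finset.sum_eq_zero
  intro i hi
  rw [Finset.mem_range] at hi
  have e1 : (Tm N q ^ i) ⟨0, h0⟩ ⟨j, by omega⟩
      * (Tm N q ^ ((k : ℕ) - i)) ⟨j + 1, by omega⟩ ⟨0, h0⟩ = 0 := by
    rcases lt_or_ge i j with h | h
    · rw [(pe_lt h0 q hjN h).1, zero_mul]
    · rw [(pe_lt h0 q hj1N (show (k : ℕ) - i < j + 1 by omega)).2, mul_zero]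
  have e2 : (Tm N q ^ i) ⟨0, h0⟩ ⟨j + 1, by omega⟩
      * (Tm N q ^ ((k : ℕ) - i)) ⟨j, by omega⟩ ⟨0, h0⟩ = 0 := by
    rcases lt_or_ge i (j + 1) with h | h
    · rw [(pe_lt h0 q hj1N h).1, zero_mul]
    · rw [(pe_lt h0 q hjN (show (k : ℕ) - i < j by omega)).2, mul_zero]
  rw [e1, e2, add_zero]

lemma colB_diag (h0 : 0 < N) (q : Fin (2 * N - 1) → ℝ) (k c : Fin (2 * N - 1))
    {j : ℕ} (hj : j < N - 1) (hcv : (c : ℕ) = N + j) (hk : (k : ℕ) = 2 * j + 1) :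
    LinearMap.toMatrix' ((DFCL N h0 q) : (Fin (2 * N - 1) → ℝ) →ₗ[ℝ] (Fin (2 * N - 1) → ℝ)) k c
      = 2 * q ⟨N + j, by omega⟩ * cprod N q j ^ 2 := by
  have hjN : j < N := by omega
  have hj1N : j + 1 < N := by omega
  rw [MJ_colB h0 q k c hj hcv, Finset.sum_add_distrib]
  have hS1 : ∑ i ∈ Finset.range ((k : ℕ) + 1), (Tm N q ^ i) ⟨0, h0⟩ ⟨j, by omega⟩
      * (Tm N q ^ ((k : ℕ) - i)) ⟨j + 1, by omega⟩ ⟨0, h0⟩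
      = cprod N q j * cprod N q (j + 1) := by
    rw [Finset.sum_eq_single j]
    · rw [(pe_eq h0 q hjN).1, show (k : ℕ) - j = j + 1 by omega, (pe_eq h0 q hj1N).2]
    · intro i hi hij
      rw [Finset.mem_range] at hi
      rcases lt_or_ge i j with h | h
      · rw [(pe_lt h0 q hjN h).1, zero_mul]
      · rw [(pe_lt h0 q hj1N (show (k : ℕ) - i < j + 1 by omega)).2, mul_zero]
    · intro h
      rw [Finset.mem_range] at h
      omega
  have hS2 : ∑ i ∈ Finset.range ((k : ℕ) + 1), (Tm N q ^ i) ⟨0, h0⟩ ⟨j + 1, by omega⟩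
      * (Tm N q ^ ((k : ℕ) - i)) ⟨j, by omega⟩ ⟨0, h0⟩
      = cprod N q (j + 1) * cprod N q j := by
    rw [Finset.sum_eq_single (j + 1)]
    · rw [(pe_eq h0 q hj1N).1, show (k : ℕ) - (j + 1) = j by omega, (pe_eq h0 q hjN).2]
    · intro i hi hij
      rw [Finset.mem_range] at hi
      rcases lt_or_ge i (j + 1) with h | h
      · rw [(pe_lt h0 q hj1N h).1, zero_mul]
      · rw [(pe_lt h0 q hjN (show (k : ℕ) - i < j by omega)).2, mul_zero]
    · intro h
      rw [Finset.mem_range] at h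
      omega
  rw [hS1, hS2, cprod_succ q hj]
  ring

lemma σp_τp_inl (j : Fin N) :
    σp N (τp N (Sum.inl j)) = ⟨(j : ℕ), by have := j.isLt; omega⟩ := by
  rw [τp_inl, σp_even _ (by simp only [Fin.val_mk]; omega)]
  apply Fin.ext
  simp only [Fin.val_mk]
  omega

lemma σp_τp_inr (j : Fin (N - 1)) :
    σp N (τp N (Sum.inr j)) = ⟨N + (j : ℕ), by have := j.isLt; omega⟩ := by
  rw [τp_inr, σp_odd _ (by simp only [Fin.val_mk]; omega)]
  apply Fin.ext
  simp only [Fin.val_mk]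
  omega

lemma abs_det_DFCL (h0 : 0 < N) (q : Fin (2 * N - 1) → ℝ) :
    |LinearMap.det ((DFCL N h0 q) : (Fin (2 * N - 1) → ℝ) →ₗ[ℝ] (Fin (2 * N - 1) → ℝ))|
      = |(∏ j : Fin N, cprod N q (j : ℕ) ^ 2) *
          ∏ j : Fin (N - 1),
            (2 * q ⟨N + (j : ℕ), by have := j.isLt; omega⟩ * cprod N q (j : ℕ) ^ 2)| := by
  rw [← LinearMap.det_toMatrix']
  set M := LinearMap.toMatrix'
    ((DFCL N h0 q) : (Fin (2 * N - 1) → ℝ) →ₗ[ℝ] (Fin (2 * N - 1) → ℝ)) with hM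
  have htri : (M.submatrix id (σp N)).BlockTriangular OrderDual.toDual := by
    intro a b hab
    have hv : (a : ℕ) < (b : ℕ) := hab
    have hb := b.isLt
    rw [Matrix.submatrix_apply, id_eq]
    by_cases hpar : (b : ℕ) % 2 = 0
    · rw [σp_even b hpar]
      exact colA_zero h0 q a _ (by simp only [Fin.val_mk]; omega)
        (by simp only [Fin.val_mk]; omega)
    · rw [σp_odd b hpar]
      exact colB_zero h0 q a _ (j := (b : ℕ) / 2) (by omega)
        (by simp only [Fin.val_mk]) (by omega)
  have h2 : (M.submatrix id (σp N)).det = ∏ k, (M.submatrix id (σp N)) k k :=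
    Matrix.det_of_lowerTriangular _ htri
  have h1 : (M.submatrix id (σp N)).det = Equiv.Perm.sign (σp N) * M.det :=
    Matrix.det_permute' (σp N) M
  have habs : |M.det| = |∏ k, M k (σp N k)| := by
    have h3 : ∏ k, (M.submatrix id (σp N)) k k = ∏ k, M k (σp N k) := by
      refine Finset.prod_congr rfl fun k _ => ?_
      rw [Matrix.submatrix_apply, id_eq]
    rw [← h3, ← h2, h1, abs_mul]
    rcases Int.units_eq_one_or (Equiv.Perm.sign (σp N)) with h | h <;> rw [h] <;> norm_num
  rw [habs]
  congr 1
  rw [← Equiv.prod_comp (τp N) (fun k => M k (σp N k)), Fintype.prod_sum_type]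
  congr 1
  · refine Finset.prod_congr rfl fun j _ => ?_
    rw [σp_τp_inl j, hM]
    exact colA_diag h0 q _ _ j.isLt (by rw [τp_inl])
  · refine Finset.prod_congr rfl fun j _ => ?_
    rw [σp_τp_inr j, hM]
    exact colB_diag h0 q _ _ (j := (j : ℕ)) j.isLt rfl (by rw [τp_inr])

lemma toMatrix'_DsqCL (p : Fin (2 * N - 1) → ℝ) :
    LinearMap.toMatrix' ((DsqCL N p) : (Fin (2 * N - 1) → ℝ) →ₗ[ℝ] (Fin (2 * N - 1) → ℝ))
      = Matrix.diagonal (fun l : Fin (2 * N - 1) => if (l : ℕ) < N then 1 else 1 / (2 * Real.sqrt (p l))) := by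
  ext k l
  rw [LinearMap.toMatrix'_apply]
  simp only [ContinuousLinearMap.coe_coe, DsqCL, ContinuousLinearMap.pi_apply]
  by_cases hkl : k = l
  · subst hkl
    rw [Matrix.diagonal_apply_eq]
    split_ifs with h
    · simp
    · simp
  · rw [Matrix.diagonal_apply_ne _ hkl]
    split_ifs with h
    · simp [hkl]
    · simp [hkl]

lemma abs_det_DsqCL (p : Fin (2 * N - 1) → ℝ) :
    |LinearMap.det ((DsqCL N p) : (Fin (2 * N - 1) → ℝ) →ₗ[ℝ] (Fin (2 * N - 1) → ℝ))|
      = ∏ j : Fin (N - 1),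
          |1 / (2 * Real.sqrt (p ⟨N + (j : ℕ), by have := j.isLt; omega⟩))| := by
  rw [← LinearMap.det_toMatrix', toMatrix'_DsqCL, Matrix.det_diagonal, Finset.abs_prod,
    ← Equiv.prod_comp (ρp N)
      (fun l : Fin (2 * N - 1) => |if (l : ℕ) < N then (1 : ℝ) else 1 / (2 * Real.sqrt (p l))|),
    Fintype.prod_sum_type]
  have h1 : (∏ j : Fin N,
      |if ((ρp N (Sum.inl j) : Fin (2 * N - 1)) : ℕ) < N then (1 : ℝ)
        else 1 / (2 * Real.sqrt (p (ρp N (Sum.inl j))))|) = 1 := by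
    apply Finset.prod_eq_one
    intro j _
    rw [ρp_inl, if_pos (by simp only [Fin.val_mk]; exact j.isLt)]
    norm_num
  rw [h1, one_mul]
  refine Finset.prod_congr rfl fun j _ => ?_
  rw [ρp_inr, if_neg (by simp only [Fin.val_mk]; omega)]

lemma contDiff_Tm_entry (s t : Fin N) :
    ContDiff ℝ 1 fun q : Fin (2 * N - 1) → ℝ => Tm N q s t := by
  simp only [Tm, Matrix.of_apply]
  split_ifs <;>
    first
      | exact contDiff_const
      | exact (contDiff_pi.mp contDiff_id) _

lemma contDiff_pow_entry (m : ℕ) : ∀ s t : Fin N,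
    ContDiff ℝ 1 fun q : Fin (2 * N - 1) → ℝ => (Tm N q ^ m) s t := by
  induction m with
  | zero => intro s t; simp only [pow_zero]; exact contDiff_const
  | succ m ih =>
    intro s t
    have hrw : (fun q : Fin (2 * N - 1) → ℝ => (Tm N q ^ (m + 1)) s t)
        = fun q => ∑ u : Fin N, (Tm N q ^ m) s u * Tm N q u t := by
      funext q; rw [pow_succ, Matrix.mul_apply]
    rw [hrw]
    exact ContDiff.sum fun u _ => (ih s u).mul (contDiff_Tm_entry u t)

lemma contDiff_Fm (h0 : 0 < N) : ContDiff ℝ 1 (Fm N h0) :=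
  contDiff_pi.2 fun k => contDiff_pow_entry _ _ _

lemma prod_swap_aux (β : ℕ → ℝ) : ∀ M : ℕ,
    ∏ j ∈ Finset.range M, (∏ t ∈ Finset.range j, β t)
      = ∏ t ∈ Finset.range M, β t ^ (M - 1 - t) := by
  intro M
  induction M with
  | zero => simp
  | succ M ih =>
    rw [Finset.prod_range_succ, ih, Finset.prod_range_succ]
    have h0 : β M ^ (M + 1 - 1 - M) = 1 := by
      have he : M + 1 - 1 - M = 0 := by omega
      rw [he, pow_zero]
    rw [h0, mul_one]
    have hc : ∀ t ∈ Finset.range M, β t ^ (M + 1 - 1 - t) = β t ^ (M - 1 - t) * β t := by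
      intro t ht
      rw [Finset.mem_range] at ht
      rw [← pow_succ]
      congr 1
      omega
    rw [Finset.prod_congr rfl hc, Finset.prod_mul_distrib]

lemma jacobi_Tm (p : Fin (2 * N - 1) → ℝ) :
    jacobiMatrix (xPart p) (wPart p) = Tm N (sqv N p) := by
  ext i j
  have hi := i.isLt
  simp only [jacobiMatrix, Tm, Matrix.of_apply]
  by_cases hij : i = j
  · rw [if_pos hij, if_pos hij]
    simp only [xPart, sqv]
    (try split_ifs with h) <;>
      first
        | rfl
        | (exfalso; (try simp only [Fin.val_mk] at h); omega)
  · rw [if_neg hij, if_neg hij]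
    by_cases h1 : (i : ℕ) + 1 = (j : ℕ)
    · rw [dif_pos h1, dif_pos h1]
      simp only [wPart, sqv]
      (try split_ifs with h) <;>
        first
          | rfl
          | (exfalso; (try simp only [Fin.val_mk] at h); omega)
    · rw [dif_neg h1, dif_neg h1]
      by_cases h2 : (j : ℕ) + 1 = (i : ℕ)
      · rw [dif_pos h2, dif_pos h2]
        simp only [wPart, sqv]
        split_ifs with h
        · exfalso; omega
        · rfl
      · rw [dif_neg h2, dif_neg h2]

lemma jmm_eq {h0 : 0 < N} :
    jacobiMomentMap N h0 = fun p => Fm N h0 (sqv N p) := by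
  funext p
  funext k
  simp only [jacobiMomentMap, Fm]
  rw [jacobi_Tm p]

lemma contDiffOn_sqv :
    ContDiffOn ℝ 1 (sqv N) {p : Fin (2 * N - 1) → ℝ | ∀ i, 0 < wPart p i} := by
  apply contDiffOn_pi.2
  intro l
  by_cases h : (l : ℕ) < N
  · have h1 : (fun p : Fin (2 * N - 1) → ℝ => sqv N p l) = fun p => p l := by
      funext p; simp [sqv, if_pos h]
    rw [h1]
    exact ((contDiff_pi.mp contDiff_id) l).contDiffOn
  · have hfun : (fun p : Fin (2 * N - 1) → ℝ => sqv N p l) = fun p => Real.sqrt (p l) := by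
      funext p; simp [sqv, if_neg h]
    rw [hfun]
    intro p hp
    have hpl : 0 < p l := by
      have h2 := hp ⟨(l : ℕ) - N, by have := l.isLt; omega⟩
      simp only [wPart, Fin.val_mk] at h2
      have he : (⟨N + ((l : ℕ) - N), by have := l.isLt; omega⟩ : Fin (2 * N - 1)) = l :=
        Fin.ext (by simp only [Fin.val_mk]; omega)
      rwa [he] at h2
    exact ((Real.contDiffAt_sqrt (ne_of_gt hpl)).comp p
      (((contDiff_pi.mp contDiff_id) l).contDiffAt)).contDiffWithinAt

lemma cprod_sqv_sq (p : Fin (2 * N - 1) → ℝ) (hp : ∀ i : Fin (N - 1), 0 < wPart p i) (m : ℕ) :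
    cprod N (sqv N p) m ^ 2
      = ∏ t ∈ Finset.range m, (if h : t < N - 1 then p ⟨N + t, by omega⟩ else 1) := by
  rw [cprod, ← Finset.prod_pow]
  refine Finset.prod_congr rfl fun t ht => ?_
  by_cases h : t < N - 1
  · rw [dif_pos h, dif_pos h]
    have h1 : sqv N p ⟨N + t, by omega⟩ = Real.sqrt (p ⟨N + t, by omega⟩) := by
      simp only [sqv]
      rw [if_neg (by (try simp only [Fin.val_mk]); omega)]
    rw [h1, Real.sq_sqrt]
    have h2 := hp ⟨t, h⟩
    simp only [wPart, Fin.val_mk] at h2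
    exact le_of_lt h2
  · rw [dif_neg h, dif_neg h, one_pow]

lemma alg1 (x C : ℝ) (hx : 0 < x) : 2 * Real.sqrt x * C * (1 / (2 * Real.sqrt x)) = C := by
  have hs : Real.sqrt x ≠ 0 := ne_of_gt (Real.sqrt_pos.mpr hx)
  field_simp

lemma final_prod (hN : 2 ≤ N) (p : Fin (2 * N - 1) → ℝ)
    (hp : ∀ i : Fin (N - 1), 0 < wPart p i) :
    |(∏ j : Fin N, cprod N (sqv N p) (j : ℕ) ^ 2) *
        ∏ j : Fin (N - 1),
          (2 * sqv N p ⟨N + (j : ℕ), by have := j.isLt; omega⟩ *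
            cprod N (sqv N p) (j : ℕ) ^ 2)| *
      ∏ j : Fin (N - 1), |1 / (2 * Real.sqrt (p ⟨N + (j : ℕ), by have := j.isLt; omega⟩))|
      = ∏ i : Fin (N - 1), wPart p i ^ (2 * (N - 1 - (i : ℕ)) - 1) := by
  have hpv : ∀ (t : ℕ) (h : t < N - 1), 0 < p ⟨N + t, by omega⟩ := by
    intro t h
    have h2 := hp ⟨t, h⟩
    simpa only [wPart, Fin.val_mk] using h2
  set β : ℕ → ℝ := fun t => if h : t < N - 1 then p ⟨N + t, by omega⟩ else 1 with hβ
  have hβpos : ∀ t, 0 < β t := by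
    intro t
    rw [hβ]
    dsimp only
    split_ifs with h
    · exact hpv t h
    · norm_num
  have hC : ∀ m, cprod N (sqv N p) m ^ 2 = ∏ t ∈ Finset.range m, β t := by
    intro m
    rw [cprod_sqv_sq p hp m]
  have hCpos : ∀ m, 0 < ∏ t ∈ Finset.range m, β t :=
    fun m => Finset.prod_pos fun t _ => hβpos t
  have hsqv : ∀ (t : ℕ) (h : t < N - 1),
      sqv N p ⟨N + t, by omega⟩ = Real.sqrt (p ⟨N + t, by omega⟩) := by
    intro t h
    simp only [sqv]
    rw [if_neg (by (try simp only [Fin.val_mk]); omega)]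
  have hXpos : 0 < (∏ j : Fin N, cprod N (sqv N p) (j : ℕ) ^ 2) *
      ∏ j : Fin (N - 1),
        (2 * sqv N p ⟨N + (j : ℕ), by have := j.isLt; omega⟩ *
          cprod N (sqv N p) (j : ℕ) ^ 2) := by
    apply mul_pos
    · exact Finset.prod_pos fun j _ => by rw [hC]; exact hCpos _
    · apply Finset.prod_pos
      intro j _
      apply mul_pos
      · apply mul_pos two_pos
        rw [hsqv _ j.isLt]
        exact Real.sqrt_pos.mpr (hpv _ j.isLt)
      · rw [hC]; exact hCpos _
  rw [abs_of_pos hXpos]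
  have habs2 : ∀ j : Fin (N - 1),
      |1 / (2 * Real.sqrt (p ⟨N + (j : ℕ), by have := j.isLt; omega⟩))|
        = 1 / (2 * Real.sqrt (p ⟨N + (j : ℕ), by have := j.isLt; omega⟩)) := fun j =>
    abs_of_pos (one_div_pos.mpr (mul_pos two_pos (Real.sqrt_pos.mpr (hpv _ j.isLt))))
  rw [Finset.prod_congr rfl (fun j _ => habs2 j)]
  rw [mul_assoc, ← Finset.prod_mul_distrib]
  have hmid : ∀ j : Fin (N - 1),
      (2 * sqv N p ⟨N + (j : ℕ), by have := j.isLt; omega⟩ *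
          cprod N (sqv N p) (j : ℕ) ^ 2)
        * (1 / (2 * Real.sqrt (p ⟨N + (j : ℕ), by have := j.isLt; omega⟩)))
      = ∏ t ∈ Finset.range (j : ℕ), β t := by
    intro j
    rw [hsqv _ j.isLt, hC]
    exact alg1 _ _ (hpv _ j.isLt)
  rw [Finset.prod_congr rfl (fun j _ => hmid j)]
  have h1 : ∀ j : Fin N, cprod N (sqv N p) (j : ℕ) ^ 2
      = ∏ t ∈ Finset.range (j : ℕ), β t := fun j => hC _
  rw [Finset.prod_congr rfl (fun j _ => h1 j),
    Fin.prod_univ_eq_prod_range (fun m => ∏ t ∈ Finset.range m, β t) N,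
    Fin.prod_univ_eq_prod_range (fun m => ∏ t ∈ Finset.range m, β t) (N - 1),
    prod_swap_aux β N, prod_swap_aux β (N - 1)]
  have hsplit : ∏ t ∈ Finset.range N, β t ^ (N - 1 - t)
      = ∏ t ∈ Finset.range (N - 1), β t ^ (N - 1 - t) := by
    have h2 := Finset.prod_range_succ (fun t => β t ^ (N - 1 - t)) (N - 1)
    rw [show N - 1 + 1 = N from by omega] at h2
    rw [h2, show N - 1 - (N - 1) = 0 from by omega, pow_zero, mul_one]
  rw [hsplit, ← Finset.prod_mul_distrib]
  have hexp : ∀ t ∈ Finset.range (N - 1),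
      β t ^ (N - 1 - t) * β t ^ (N - 1 - 1 - t) = β t ^ (2 * (N - 1 - t) - 1) := by
    intro t ht
    rw [Finset.mem_range] at ht
    rw [← pow_add]
    congr 1
    omega
  rw [Finset.prod_congr rfl hexp]
  have hfin : ∏ i : Fin (N - 1), wPart p i ^ (2 * (N - 1 - (i : ℕ)) - 1)
      = ∏ t ∈ Finset.range (N - 1), β t ^ (2 * (N - 1 - t) - 1) := by
    rw [← Fin.prod_univ_eq_prod_range (fun t => β t ^ (2 * (N - 1 - t) - 1)) (N - 1)]
    refine Finset.prod_congr rfl fun i _ => ?_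
    congr 1
    rw [hβ]
    dsimp only
    rw [dif_pos i.isLt]
    rfl
  rw [hfin]

end JacobiAux
end JacAux

/-- Jacobian of the map from Jacobi coefficients to moments. -/
theorem jacobi_to_moments_jacobian (N : ℕ) (hN : 2 ≤ N) :
    ContDiffOn ℝ 1 (jacobiMomentMap N (by omega))
      {p : Fin (2 * N - 1) → ℝ | ∀ i, 0 < wPart p i} ∧
    ∀ p ∈ {p : Fin (2 * N - 1) → ℝ | ∀ i, 0 < wPart p i},
      |LinearMap.det (fderiv ℝ (jacobiMomentMap N (by omega)) p).toLinearMap|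
        = ∏ i : Fin (N - 1), wPart p i ^ (2 * (N - 1 - (i : ℕ)) - 1) := by
  have h0 : 0 < N := by omega
  constructor
  · rw [JacobiAux.jmm_eq]
    exact (JacobiAux.contDiff_Fm _).comp_contDiffOn JacobiAux.contDiffOn_sqv
  · intro p hp
    have hp' : ∀ l : Fin (2 * N - 1), N ≤ (l : ℕ) → 0 < p l := by
      intro l hl
      have h2 := hp ⟨(l : ℕ) - N, by have := l.isLt; omega⟩
      simp only [wPart, Fin.val_mk] at h2
      have he : (⟨N + ((l : ℕ) - N), by have := l.isLt; omega⟩ : Fin (2 * N - 1)) = l :=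
        Fin.ext (by simp only [Fin.val_mk]; omega)
      rwa [he] at h2
    have key : fderiv ℝ (jacobiMomentMap N h0) p
        = (JacobiAux.DFCL N h0 (JacobiAux.sqv N p)).comp (JacobiAux.DsqCL N p) := by
      have hder : HasFDerivAt (jacobiMomentMap N h0)
          ((JacobiAux.DFCL N h0 (JacobiAux.sqv N p)).comp (JacobiAux.DsqCL N p)) p := by
        rw [JacobiAux.jmm_eq]
        exact (JacobiAux.hasFDerivAt_Fm h0 (JacobiAux.sqv N p)).comp p
          (JacobiAux.hasFDerivAt_sqv p hp')
      exact hder.fderiv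
    rw [key]
    have hsplit2 : ((JacobiAux.DFCL N h0 (JacobiAux.sqv N p)).comp
          (JacobiAux.DsqCL N p)).toLinearMap
        = ((JacobiAux.DFCL N h0 (JacobiAux.sqv N p)) :
              (Fin (2 * N - 1) → ℝ) →ₗ[ℝ] (Fin (2 * N - 1) → ℝ)).comp
            ((JacobiAux.DsqCL N p) :
              (Fin (2 * N - 1) → ℝ) →ₗ[ℝ] (Fin (2 * N - 1) → ℝ)) := rfl
    rw [hsplit2, LinearMap.det_comp, abs_mul, JacobiAux.abs_det_DFCL h0 (JacobiAux.sqv N p),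
      JacobiAux.abs_det_DsqCL p]
    exact JacobiAux.final_prod hN p hp
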